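/- For every integers r >= 2 and t >= 0, any set of rt + 2r - 1 points on the real line admits a partition into r parts X_1, ..., X_r such that for every subset C of at most t points, the intersection of the convex hulls (intervals) of X_1 \ C, ..., X_r \ C is nonempty; moreover rt + 2r - 1 is the minimal such number. -/

import Mathlib

open Finset

lemma lb1 (r j m : ℕ) (hr : 0 < r) (hj : j < r) :
    m / r ≤ ((range m).filter (fun i => i % r = j)).card := by
  have hcard : (range (m / r)).card = m / r := by simp
  rw [← hcard]
  apply Finset.card_le_card_of_injOn (fun i => r * i + j)
  · intro i hi
    simp only [mem_coe, mem_range] at hi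
    have h1 : (i + 1) * r ≤ m := (Nat.le_div_iff_mul_le hr).mp hi
    have h2 : r * i + r = (i + 1) * r := by ring
    simp only [mem_coe, mem_filter, mem_range]
    refine ⟨by omega, ?_⟩
    rw [Nat.mul_add_mod]; exact Nat.mod_eq_of_lt hj
  · intro a _ b _ hab
    simp only at hab
    have : r * a = r * b := by omega
    exact Nat.eq_of_mul_eq_mul_left hr this

lemma lb2 (r k m p : ℕ) (hr : 0 < r) (hk : k < r) (hpm : p ≤ m) :
    (m - p) / r ≤ ((range m).filter (fun i => i % r = k ∧ p ≤ i)).card := by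
  set c := r * (p / r + (if k < p % r then 1 else 0)) + k with hc
  have hdm : r * (p / r) + p % r = p := Nat.div_add_mod p r
  have hmr : p % r < r := Nat.mod_lt _ hr
  have hcmod : c % r = k := by rw [hc, Nat.mul_add_mod]; exact Nat.mod_eq_of_lt hk
  have hmul : r * (p / r + (if k < p % r then 1 else 0))
      = r * (p / r) + r * (if k < p % r then 1 else 0) := by ring
  have hpc : p ≤ c := by
    rw [hc, hmul]
    generalize r * (p / r) = A at hdm ⊢
    split <;> omega
  have hcp : c ≤ p + r - 1 := by
    rw [hc, hmul]
    generalize r * (p / r) = A at hdm ⊢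
    split <;> omega
  have hcard : (range ((m - p) / r)).card = (m - p) / r := by simp
  rw [← hcard]
  apply Finset.card_le_card_of_injOn (fun i => c + r * i)
  · intro i hi
    simp only [mem_coe, mem_range] at hi
    have h1 : (i + 1) * r ≤ m - p := (Nat.le_div_iff_mul_le hr).mp hi
    have h2 : r * i + r = (i + 1) * r := by ring
    simp only [mem_coe, mem_filter, mem_range]
    refine ⟨by omega, ?_, by omega⟩
    rw [Nat.add_mul_mod_self_left]; exact hcmod
  · intro a _ b _ hab
    simp only at hab
    have : r * a = r * b := by omega
    exact Nat.eq_of_mul_eq_mul_left hr this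

lemma arith (r t n p : ℕ) (hr : 2 ≤ r) (hn : n = r * t + 2 * r - 1) (hp : p < n) :
    t + 1 ≤ p / r + (n - p) / r := by
  have hr0 : 0 < r := by omega
  have h1 : r * (p / r) + p % r = p := Nat.div_add_mod p r
  have h2 : r * ((n - p) / r) + (n - p) % r = n - p := Nat.div_add_mod (n - p) r
  have h3 : p % r < r := Nat.mod_lt _ hr0
  have h4 : (n - p) % r < r := Nat.mod_lt _ hr0
  by_contra hcon
  push_neg at hcon
  have h5 : p / r + (n - p) / r ≤ t := by omega
  have h6 : r * (p / r) + r * ((n - p) / r) ≤ r * t := by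
    calc r * (p / r) + r * ((n - p) / r) = r * (p / r + (n - p) / r) := by ring
      _ ≤ r * t := Nat.mul_le_mul_left r h5
  generalize r * (p / r) = A at *
  generalize r * ((n - p) / r) = B at *
  generalize r * t = T at *
  omega

lemma card_fin_filter (n : ℕ) (Q : ℕ → Prop) [DecidablePred Q] :
    (Finset.univ.filter fun i : Fin n => Q i).card = ((range n).filter Q).card := by
  rw [Finset.card_filter, Finset.card_filter]
  exact Fin.sum_univ_eq_sum_range (fun i => if Q i then 1 else 0) n

lemma count_key (r t n : ℕ) (hr : 2 ≤ r) (j k : ℕ) (hj : j < r) (hk : k < r)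
    (hn : n = r * t + 2 * r - 1) (p : Fin n) :
    t + 1 ≤ (Finset.univ.filter fun i : Fin n => (i:ℕ) % r = j ∧ (i:ℕ) < (p:ℕ)).card
      + (Finset.univ.filter fun i : Fin n => (i:ℕ) % r = k ∧ (p:ℕ) ≤ (i:ℕ)).card := by
  have hr0 : 0 < r := by omega
  have hp : (p:ℕ) < n := p.isLt
  rw [card_fin_filter n (fun i => i % r = j ∧ i < (p:ℕ)),
      card_fin_filter n (fun i => i % r = k ∧ (p:ℕ) ≤ i)]
  have e1 : (range n).filter (fun i => i % r = j ∧ i < (p:ℕ))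
      = (range (p:ℕ)).filter (fun i => i % r = j) := by
    ext i
    simp only [mem_filter, mem_range]
    constructor
    · rintro ⟨-, h1, h2⟩; exact ⟨h2, h1⟩
    · rintro ⟨h2, h1⟩; exact ⟨h2.trans hp, h1, h2⟩
  rw [e1]
  have := lb1 r j (p:ℕ) hr0 hj
  have := lb2 r k n (p:ℕ) hr0 hk hp.le
  have := arith r t n (p:ℕ) hr hn hp
  omega
lemma part1 (r t : ℕ) (hr : 2 ≤ r) (X : Finset ℝ) (hX : X.card = r * t + 2 * r - 1) :
    ∃ P : Fin r → Finset ℝ,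
      (∀ j, P j ⊆ X) ∧ (∀ j k, j ≠ k → Disjoint (P j) (P k)) ∧
      (∀ x ∈ X, ∃ j, x ∈ P j) ∧
      ∀ C ⊆ X, C.card ≤ t →
        (⋂ j, convexHull ℝ ((P j \ C : Finset ℝ) : Set ℝ)).Nonempty := by
  have hr0 : 0 < r := by omega
  set n := r * t + 2 * r - 1 with hn
  set e := X.orderIsoOfFin hX with he
  set f : Fin n → ℝ := fun i => (e i : ℝ) with hf
  have hfmem : ∀ i, f i ∈ X := fun i => (e i).2
  have hfmono : StrictMono f := fun a b h => Subtype.coe_lt_coe.mpr (e.strictMono h)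
  have hfinj := hfmono.injective
  set P : Fin r → Finset ℝ := fun j =>
    (Finset.univ.filter fun i : Fin n => (i : ℕ) % r = (j : ℕ)).image f with hP
  have hmemP : ∀ (j : Fin r) (x : ℝ), x ∈ P j ↔ ∃ i : Fin n, (i : ℕ) % r = (j : ℕ) ∧ f i = x := by
    intro j x
    simp [hP, Finset.mem_image, Finset.mem_filter]
  refine ⟨P, ?_, ?_, ?_, ?_⟩
  · intro j x hx
    obtain ⟨i, -, rfl⟩ := (hmemP j x).mp hx
    exact hfmem i
  · intro j k hjk
    rw [Finset.disjoint_left]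
    intro x hxj hxk
    obtain ⟨i, hi, rfl⟩ := (hmemP j _).mp hxj
    obtain ⟨i', hi', hval⟩ := (hmemP k _).mp hxk
    cases hfinj hval
    exact hjk (Fin.ext (hi ▸ hi'))
  · intro x hx
    refine ⟨⟨((e.symm ⟨x, hx⟩ : Fin n) : ℕ) % r, Nat.mod_lt _ hr0⟩, ?_⟩
    rw [hmemP]
    exact ⟨e.symm ⟨x, hx⟩, rfl, by rw [hf]; simp⟩
  · intro C hCX hC
    have hPcard : ∀ j : Fin r, t + 1 ≤ (P j).card := by
      intro j
      have hc : (P j).card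
          = (Finset.univ.filter fun i : Fin n => (i : ℕ) % r = (j : ℕ)).card :=
        Finset.card_image_of_injOn hfinj.injOn
      rw [hc, card_fin_filter n (fun i => i % r = (j : ℕ))]
      have h1 := lb1 r (j : ℕ) n hr0 j.isLt
      have hdiv : t + 1 ≤ n / r := by
        rw [Nat.le_div_iff_mul_le hr0]
        have hring : (t + 1) * r = r * t + r := by ring
        omega
      omega
    have hne : ∀ j : Fin r, (P j \ C).Nonempty := by
      intro j
      rw [← Finset.card_pos]
      have := Finset.le_card_sdiff C (P j)
      have := hPcard j
      omega
    have hNE : Nonempty (Fin r) := ⟨⟨0, hr0⟩⟩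
    have hFinr : (Finset.univ : Finset (Fin r)).Nonempty := Finset.univ_nonempty
    set z := Finset.univ.sup' hFinr (fun j => (P j \ C).min' (hne j)) with hz
    have key : ∀ j k : Fin r, (P j \ C).min' (hne j) ≤ (P k \ C).max' (hne k) := by
      intro j k
      by_cases hjk : j = k
      · subst hjk; exact Finset.min'_le _ _ (Finset.max'_mem _ _)
      by_contra hcon
      push_neg at hcon
      set a := (P j \ C).min' (hne j) with ha
      set b := (P k \ C).max' (hne k) with hb
      have haP : a ∈ P j := (Finset.mem_sdiff.mp ((P j \ C).min'_mem (hne j))).1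
      obtain ⟨p, hp, hfp⟩ := Finset.mem_image.mp haP
      simp only [Finset.mem_filter, Finset.mem_univ, true_and] at hp
      set A' := (Finset.univ.filter fun i : Fin n =>
        (i : ℕ) % r = (j : ℕ) ∧ (i : ℕ) < (p : ℕ)) with hA'
      set B' := (Finset.univ.filter fun i : Fin n =>
        (i : ℕ) % r = (k : ℕ) ∧ (p : ℕ) ≤ (i : ℕ)) with hB'
      have hA'C : ∀ i ∈ A', f i ∈ C := by
        intro i hi
        simp only [hA', Finset.mem_filter, Finset.mem_univ, true_and] at hi
        have hPi : f i ∈ P j := (hmemP j _).mpr ⟨i, hi.1, rfl⟩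
        have hlt : f i < a := by
          rw [← hfp]
          exact hfmono (by exact hi.2)
        by_contra hic
        have : f i ∈ P j \ C := Finset.mem_sdiff.mpr ⟨hPi, hic⟩
        exact absurd (Finset.min'_le _ _ this) (not_le.mpr hlt)
      have hB'C : ∀ i ∈ B', f i ∈ C := by
        intro i hi
        simp only [hB', Finset.mem_filter, Finset.mem_univ, true_and] at hi
        have hPi : f i ∈ P k := (hmemP k _).mpr ⟨i, hi.1, rfl⟩
        have hge : a ≤ f i := by
          rw [← hfp]
          exact hfmono.monotone (by exact hi.2)
        by_contra hic
        have : f i ∈ P k \ C := Finset.mem_sdiff.mpr ⟨hPi, hic⟩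
        have : f i ≤ b := Finset.le_max' _ _ this
        linarith
      have hdisj : Disjoint A' B' := by
        rw [Finset.disjoint_left]
        intro i h1 h2
        simp only [hA', hB', Finset.mem_filter, Finset.mem_univ, true_and] at h1 h2
        omega
      have himg : (A' ∪ B').image f ⊆ C := by
        intro x hx
        obtain ⟨i, hi, rfl⟩ := Finset.mem_image.mp hx
        rcases Finset.mem_union.mp hi with h | h
        · exact hA'C i h
        · exact hB'C i h
      have hcardle : A'.card + B'.card ≤ C.card := by
        rw [← Finset.card_union_of_disjoint hdisj]
        calc (A' ∪ B').card = ((A' ∪ B').image f).card :=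
              (Finset.card_image_of_injOn hfinj.injOn).symm
          _ ≤ C.card := Finset.card_le_card himg
      have hck := count_key r t n hr (j : ℕ) (k : ℕ) j.isLt k.isLt hn p
      rw [← hA', ← hB'] at hck
      omega
    refine ⟨z, Set.mem_iInter.mpr fun k => ?_⟩
    have h1 : (P k \ C).min' (hne k) ≤ z := by
      rw [hz]; exact Finset.le_sup' (fun j => (P j \ C).min' (hne j)) (Finset.mem_univ k)
    have h2 : z ≤ (P k \ C).max' (hne k) := by
      obtain ⟨j0, -, hj0⟩ := Finset.exists_mem_eq_sup' hFinr
        (fun j => (P j \ C).min' (hne j))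
      rw [hz, hj0]
      exact key j0 k
    have hmin : (P k \ C).min' (hne k) ∈ convexHull ℝ ((P k \ C : Finset ℝ) : Set ℝ) :=
      subset_convexHull ℝ _ (by exact_mod_cast Finset.min'_mem _ (hne k))
    have hmax : (P k \ C).max' (hne k) ∈ convexHull ℝ ((P k \ C : Finset ℝ) : Set ℝ) :=
      subset_convexHull ℝ _ (by exact_mod_cast Finset.max'_mem _ (hne k))
    have hseg := (convex_convexHull ℝ _).segment_subset hmin hmax
    apply hseg
    rw [segment_eq_Icc (Finset.min'_le _ _ (Finset.max'_mem _ (hne k)))]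
    exact ⟨h1, h2⟩
lemma aux2 {r : ℕ} (t : ℕ) (P : Fin r → Finset ℝ) (a b : Fin r) (hab : a ≠ b)
    (hdis : ∀ j k, j ≠ k → Disjoint (P j) (P k))
    (hca : (P a).card = t + 1) (hcb : 0 < (P b).card)
    (m : ℝ) (hma : m ∈ P a) (hmle : ∀ x ∈ P b, m ≤ x) :
    ∃ C ⊆ P a, C.card ≤ t ∧ (⋂ j, convexHull ℝ ((P j \ C : Finset ℝ) : Set ℝ)) = ∅ := by
  refine ⟨(P a).erase m, Finset.erase_subset _ _, ?_, ?_⟩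
  · rw [Finset.card_erase_of_mem hma, hca]
    omega
  · have hbne : (P b).Nonempty := Finset.card_pos.mp hcb
    have h1 : P a \ (P a).erase m = {m} := by
      ext x
      simp only [Finset.mem_sdiff, Finset.mem_erase, Finset.mem_singleton, not_and]
      constructor
      · rintro ⟨hx, h⟩
        by_contra hne
        exact (h hne) hx
      · rintro rfl
        exact ⟨hma, fun h _ => absurd rfl h⟩
    have h2 : P b \ (P a).erase m = P b := by
      rw [Finset.sdiff_eq_self_iff_disjoint]
      exact (hdis b a hab.symm).mono_right (Finset.erase_subset _ _)
    have hmnb : m ∉ P b := Finset.disjoint_left.mp (hdis a b hab) hma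
    have hmy : m < (P b).min' hbne := by
      refine lt_of_le_of_ne (hmle _ (Finset.min'_mem _ _)) ?_
      intro h
      exact hmnb (h ▸ Finset.min'_mem _ _)
    apply Set.eq_empty_iff_forall_notMem.mpr
    intro x hx
    have hxa := Set.mem_iInter.mp hx a
    have hxb := Set.mem_iInter.mp hx b
    rw [h1] at hxa
    rw [h2] at hxb
    simp only [Finset.coe_singleton, convexHull_singleton, Set.mem_singleton_iff] at hxa
    have hhull : convexHull ℝ ((P b : Finset ℝ) : Set ℝ)
        ⊆ Set.Icc ((P b).min' hbne) ((P b).max' hbne) := by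
      apply convexHull_min ?_ (convex_Icc _ _)
      intro y hy
      exact ⟨Finset.min'_le _ _ (by exact_mod_cast hy), Finset.le_max' _ _ (by exact_mod_cast hy)⟩
    have := (hhull hxb).1
    rw [hxa] at this
    exact absurd this (not_le.mpr hmy)

lemma part2 (r t : ℕ) (hr : 2 ≤ r) :
    ∃ X : Finset ℝ, X.card = r * t + 2 * r - 2 ∧
      ∀ P : Fin r → Finset ℝ,
        (∀ j, P j ⊆ X) → (∀ j k, j ≠ k → Disjoint (P j) (P k)) →
        (∀ x ∈ X, ∃ j, x ∈ P j) →
        ∃ C ⊆ X, C.card ≤ t ∧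
          (⋂ j, convexHull ℝ ((P j \ C : Finset ℝ) : Set ℝ)) = ∅ := by
  have hr0 : 0 < r := by omega
  set n := r * t + 2 * r - 2 with hn
  set X := (Finset.range n).image (Nat.cast : ℕ → ℝ) with hX
  have hXcard : X.card = n := by
    rw [hX, Finset.card_image_of_injective _ Nat.cast_injective, Finset.card_range]
  refine ⟨X, hXcard, ?_⟩
  intro P hsub hdis hcov
  by_cases hsmall : ∃ j, (P j).card ≤ t
  · obtain ⟨j, hj⟩ := hsmall
    refine ⟨P j, hsub j, hj, ?_⟩
    rw [← Set.subset_empty_iff]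
    have hsub2 := Set.iInter_subset
      (fun j' => convexHull ℝ ((P j' \ P j : Finset ℝ) : Set ℝ)) j
    simpa [Finset.sdiff_self] using hsub2
  · push_neg at hsmall
    have hbig : ∀ j, t + 1 ≤ (P j).card := hsmall
    have hXeq : X = Finset.univ.biUnion P := by
      ext x
      simp only [Finset.mem_biUnion, Finset.mem_univ, true_and]
      exact ⟨fun hx => hcov x hx, fun ⟨j, hj⟩ => hsub j hj⟩
    have hsum : ∑ j, (P j).card = n := by
      rw [← hXcard, hXeq, Finset.card_biUnion (fun j _ k _ hjk => hdis j k hjk)]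
    set S := Finset.univ.filter (fun j : Fin r => (P j).card = t + 1) with hS
    have hS2 : 2 ≤ S.card := by
      by_contra h
      push_neg at h
      have hbound : ∀ j : Fin r, t + 2 ≤ (P j).card + (if j ∈ S then 1 else 0) := by
        intro j
        by_cases hjS : j ∈ S
        · simp only [hjS, if_true]
          have : (P j).card = t + 1 := (Finset.mem_filter.mp hjS).2
          omega
        · simp only [hjS, if_false]
          have h1 : (P j).card ≠ t + 1 := fun hc =>
            hjS (Finset.mem_filter.mpr ⟨Finset.mem_univ j, hc⟩)
          have := hbig j
          omega
      have hsum2 := Finset.sum_le_sum (s := Finset.univ) (fun j _ => hbound j)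
      have hSsum : (∑ j : Fin r, if j ∈ S then 1 else 0) = S.card := by
        rw [Finset.sum_ite_mem, Finset.univ_inter, Finset.card_eq_sum_ones]
      have hL : (∑ _j : Fin r, (t + 2)) = r * (t + 2) := by
        rw [Finset.sum_const, Finset.card_univ, Fintype.card_fin, smul_eq_mul]
      have hR : (∑ j : Fin r, ((P j).card + if j ∈ S then 1 else 0)) = n + S.card := by
        rw [Finset.sum_add_distrib, hsum, hSsum]
      rw [hL, hR] at hsum2
      have hring : r * (t + 2) = r * t + 2 * r := by ring
      have hr2 : 2 ≤ r * t + 2 * r := by omega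
      omega
    obtain ⟨a, haS, b, hbS, hab⟩ := Finset.one_lt_card.mp hS2
    have hca : (P a).card = t + 1 := (Finset.mem_filter.mp haS).2
    have hcb : (P b).card = t + 1 := (Finset.mem_filter.mp hbS).2
    have hUne : (P a ∪ P b).Nonempty := by
      have : (P a).Nonempty := by rw [← Finset.card_pos, hca]; omega
      obtain ⟨x, hx⟩ := this
      exact ⟨x, Finset.mem_union_left _ hx⟩
    set m := (P a ∪ P b).min' hUne with hm
    have hmmem : m ∈ P a ∪ P b := Finset.min'_mem _ _
    rcases Finset.mem_union.mp hmmem with hma | hmb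
    · obtain ⟨C, hC1, hC2, hC3⟩ := aux2 t P a b hab hdis hca (by omega) m hma
        (fun x hx => Finset.min'_le _ _ (Finset.mem_union_right _ hx))
      exact ⟨C, hC1.trans (hsub a), hC2, hC3⟩
    · obtain ⟨C, hC1, hC2, hC3⟩ := aux2 t P b a hab.symm hdis hcb (by omega) m hmb
        (fun x hx => Finset.min'_le _ _ (Finset.mem_union_left _ hx))
      exact ⟨C, hC1.trans (hsub b), hC2, hC3⟩


/-- Tverberg with tolerance on the line (Mulzer–Stein): N(r,t,1) = rt + 2r - 1. Any
rt + 2r - 1 points of ℝ admit a partition into r parts such that after removing any t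
points the convex hulls of the parts still intersect, and rt + 2r - 2 points do not
suffice. -/
theorem tverberg_tolerance_dim_one (r t : ℕ) (hr : 2 ≤ r) :
    (∀ X : Finset ℝ, X.card = r * t + 2 * r - 1 →
      ∃ P : Fin r → Finset ℝ,
        (∀ j, P j ⊆ X) ∧ (∀ j k, j ≠ k → Disjoint (P j) (P k)) ∧
        (∀ x ∈ X, ∃ j, x ∈ P j) ∧
        ∀ C ⊆ X, C.card ≤ t →
          (⋂ j, convexHull ℝ ((P j \ C : Finset ℝ) : Set ℝ)).Nonempty) ∧
    (∃ X : Finset ℝ, X.card = r * t + 2 * r - 2 ∧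
      ∀ P : Fin r → Finset ℝ,
        (∀ j, P j ⊆ X) → (∀ j k, j ≠ k → Disjoint (P j) (P k)) →
        (∀ x ∈ X, ∃ j, x ∈ P j) →
        ∃ C ⊆ X, C.card ≤ t ∧
          (⋂ j, convexHull ℝ ((P j \ C : Finset ℝ) : Set ℝ)) = ∅) := by
  exact ⟨fun X hX => part1 r t hr X hX, part2 r t hr⟩
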